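/- Let D be the n×n diagonal matrix with diagonal entries alternately +1 and −1, i.e. D = diag(1, −1, 1, …, (−1)^{n−1}). If A is a K-matrix (hence invertible), then D A^{−1} D^{−1} is a K-matrix; if A is an SK-matrix, then D A^{−1} D^{−1} is an SK-matrix. -/

import Mathlib

open Matrix

/-- The minor of the matrix `A` on the row set `α` and the column set `β`
(rows and columns taken in increasing order); junk value `0` if the
cardinalities of `α` and `β` differ. -/
noncomputable def minorOn {n : ℕ} (A : Matrix (Fin n) (Fin n) ℝ)
    (α β : Finset (Fin n)) : ℝ :=
  if h : β.card = α.card then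
    (A.submatrix (⇑(α.orderEmbOfFin rfl)) (⇑(β.orderEmbOfFin h))).det
  else 0

/-- The principal submatrix `A(α)` of `A` on the index set `α`. -/
def psub {n : ℕ} (A : Matrix (Fin n) (Fin n) ℝ) (α : Finset (Fin n)) :
    Matrix (Fin α.card) (Fin α.card) ℝ :=
  A.submatrix (⇑(α.orderEmbOfFin rfl)) (⇑(α.orderEmbOfFin rfl))

/-- `A` is a Kotelyansky (K) matrix: all principal minors are positive and all
almost principal minors are nonnegative. -/
def IsK {n : ℕ} (A : Matrix (Fin n) (Fin n) ℝ) : Prop :=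
  (∀ α : Finset (Fin n), α.Nonempty → 0 < minorOn A α α) ∧
  (∀ (α : Finset (Fin n)) (r s : Fin n), r ∈ α → s ∈ α → r ≠ s →
    0 ≤ minorOn A (α.erase r) (α.erase s))

/-- `A` is a strictly Kotelyansky (SK) matrix: all principal minors and all
almost principal minors are positive. -/
def IsSK {n : ℕ} (A : Matrix (Fin n) (Fin n) ℝ) : Prop :=
  (∀ α : Finset (Fin n), α.Nonempty → 0 < minorOn A α α) ∧
  (∀ (α : Finset (Fin n)) (r s : Fin n), r ∈ α → s ∈ α → r ≠ s →
    0 < minorOn A (α.erase r) (α.erase s))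

/-- The `j`-th compound matrix of `A`: the matrix of all `j×j` minors of `A`,
indexed by the `j`-element subsets of the index set. -/
noncomputable def compound {m : ℕ} (A : Matrix (Fin m) (Fin m) ℝ) (j : ℕ) :
    Matrix {s : Finset (Fin m) // s.card = j} {s : Finset (Fin m) // s.card = j} ℝ :=
  fun s t => minorOn A s.1 t.1

/-- `A` is J-sign-symmetric for the subset `J` of its index set. -/
def IsJS {ι : Type*} (J : Set ι) (A : Matrix ι ι ℝ) : Prop :=
  (∀ i j, ((i ∈ J ∧ j ∈ J) ∨ (i ∉ J ∧ j ∉ J)) → 0 ≤ A i j) ∧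
  (∀ i j, ((i ∈ J ∧ j ∉ J) ∨ (i ∉ J ∧ j ∈ J)) → A i j ≤ 0)

/-- `A` is strictly J-sign-symmetric: J-sign-symmetric with no zero entries. -/
def IsSJS {ι : Type*} (J : Set ι) (A : Matrix ι ι ℝ) : Prop :=
  IsJS J A ∧ ∀ i j, A i j ≠ 0

/-- `A` is strictly totally J-sign-symmetric: every compound matrix `A^(j)`,
`1 ≤ j ≤ n`, is strictly J-sign-symmetric for some subset of its index set. -/
def IsSTJS {n : ℕ} (A : Matrix (Fin n) (Fin n) ℝ) : Prop :=
  ∀ j, 1 ≤ j → j ≤ n →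
    ∃ J : Set {s : Finset (Fin n) // s.card = j}, IsSJS J (compound A j)

/-- `A` is J-sign-symmetric Kotelyansky (JSK). -/
def IsJSK {n : ℕ} (A : Matrix (Fin n) (Fin n) ℝ) : Prop :=
  (∀ α : Finset (Fin n), α.Nonempty → 0 < minorOn A α α) ∧
  ∀ α : Finset (Fin n), 2 ≤ α.card →
    ∃ J : Set {s : Finset (Fin α.card) // s.card = α.card - 1},
      IsJS J (compound (psub A α) (α.card - 1))

/-- `A` is strictly J-sign-symmetric Kotelyansky (SJSK). -/
def IsSJSK {n : ℕ} (A : Matrix (Fin n) (Fin n) ℝ) : Prop :=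
  0 < A.det ∧
  ∀ α : Finset (Fin n), 2 ≤ α.card →
    ∃ J : Set {s : Finset (Fin α.card) // s.card = α.card - 1},
      IsSJS J (compound (psub A α) (α.card - 1))

/-- `l(B)`: the smallest real eigenvalue of `B`, or `∞` (`⊤` in `EReal`) if `B`
has no real eigenvalues. -/
noncomputable def lval {m : ℕ} (B : Matrix (Fin m) (Fin m) ℝ) : EReal :=
  sInf (insert (⊤ : EReal) ((fun t : ℝ => (t : EReal)) '' {t : ℝ | B.charpoly.IsRoot t}))

lemma block_jacobi {l m : Type*} [Fintype l] [Fintype m] [DecidableEq l] [DecidableEq m]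
    (M : Matrix (l ⊕ m) (l ⊕ m) ℝ) (h : IsUnit M.det) :
    M.det * ((M⁻¹).toBlocks₁₁).det = (M.toBlocks₂₂).det := by
  have hMB : M * M⁻¹ = 1 := Matrix.mul_nonsing_inv _ h
  set a := M.toBlocks₁₁; set b := M.toBlocks₁₂; set c := M.toBlocks₂₁; set d := M.toBlocks₂₂
  set p := (M⁻¹).toBlocks₁₁; set q := (M⁻¹).toBlocks₁₂
  set r := (M⁻¹).toBlocks₂₁; set s := (M⁻¹).toBlocks₂₂
  have hM : M = fromBlocks a b c d := (fromBlocks_toBlocks M).symm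
  have hB : M⁻¹ = fromBlocks p q r s := (fromBlocks_toBlocks (M⁻¹)).symm
  have h1 : fromBlocks (a*p + b*r) (a*q + b*s) (c*p + d*r) (c*q + d*s) = fromBlocks 1 0 0 1 := by
    rw [← fromBlocks_multiply, ← hM, ← hB, hMB, fromBlocks_one]
  have e11 : a*p + b*r = 1 := by
    have := congrArg Matrix.toBlocks₁₁ h1; rwa [toBlocks_fromBlocks₁₁, toBlocks_fromBlocks₁₁] at this
  have e21 : c*p + d*r = 0 := by
    have := congrArg Matrix.toBlocks₂₁ h1; rwa [toBlocks_fromBlocks₂₁, toBlocks_fromBlocks₂₁] at this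
  have key : M * fromBlocks p 0 r 1 = fromBlocks 1 b 0 d := by
    rw [hM, fromBlocks_multiply]
    rw [e11, e21]; congr 1 <;> simp
  calc M.det * p.det = M.det * (fromBlocks p (0 : Matrix l m ℝ) r (1 : Matrix m m ℝ)).det := by
        rw [det_fromBlocks_zero₁₂, det_one, mul_one]
    _ = (M * fromBlocks p 0 r 1).det := (det_mul _ _).symm
    _ = d.det := by rw [key, det_fromBlocks_zero₂₁, det_one, one_mul]

/-- If `b ∈ β`, `c ∉ β` and `c = b+1`, then the increasing enumeration of
`insert c (β.erase b)` is `swap b c` composed with that of `β`. -/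
lemma emb_swap_succ {n k : ℕ} {β : Finset (Fin n)} {b c : Fin n}
    (hb : b ∈ β) (hc : c ∉ β) (hbc : (b : ℕ) + 1 = (c : ℕ))
    (h : β.card = k) (h' : (insert c (β.erase b)).card = k) :
    ⇑((insert c (β.erase b)).orderEmbOfFin h') = (Equiv.swap b c) ∘ ⇑(β.orderEmbOfFin h) := by
  have hbne : b ≠ c := by intro e; rw [e] at hbc; omega
  refine (Finset.orderEmbOfFin_unique h' ?_ ?_).symm
  · intro i
    have hmem := Finset.orderEmbOfFin_mem β h i
    by_cases hib : β.orderEmbOfFin h i = b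
    · rw [Function.comp_apply, hib, Equiv.swap_apply_left]; exact Finset.mem_insert_self _ _
    · have hic : β.orderEmbOfFin h i ≠ c := fun e => hc (e ▸ hmem)
      rw [Function.comp_apply, Equiv.swap_apply_of_ne_of_ne hib hic]
      exact Finset.mem_insert_of_mem (Finset.mem_erase.2 ⟨hib, hmem⟩)
  · intro i j hij
    have mono := (β.orderEmbOfFin h).strictMono hij
    set x := β.orderEmbOfFin h i with hx
    set y := β.orderEmbOfFin h j with hy
    have hxm : x ∈ β := Finset.orderEmbOfFin_mem β h i
    have hym : y ∈ β := Finset.orderEmbOfFin_mem β h j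
    have hxc : x ≠ c := fun e => hc (e ▸ hxm)
    have hyc : y ≠ c := fun e => hc (e ▸ hym)
    simp only [Function.comp_apply]
    rw [← hx, ← hy]
    by_cases hxb : x = b
    · rw [hxb, Equiv.swap_apply_left, Equiv.swap_apply_of_ne_of_ne (by rw [← hxb]; exact ne_of_gt mono) hyc]
      have : (b : ℕ) < (y : ℕ) := by rw [← hxb]; exact mono
      have : (c : ℕ) ≤ (y : ℕ) := by omega
      have hyne : (y : ℕ) ≠ (c : ℕ) := fun e => hyc (Fin.ext e)
      exact Fin.lt_def.2 (by omega)
    · by_cases hyb : y = b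
      · rw [Equiv.swap_apply_of_ne_of_ne hxb hxc, hyb, Equiv.swap_apply_left]
        have : (x : ℕ) < (b : ℕ) := by rw [← hyb]; exact mono
        exact Fin.lt_def.2 (by omega)
      · rw [Equiv.swap_apply_of_ne_of_ne hxb hxc, Equiv.swap_apply_of_ne_of_ne hyb hyc]
        exact mono

lemma emb_congr {n k : ℕ} {s t : Finset (Fin n)} (hst : s = t)
    (h : s.card = k) (h' : t.card = k) :
    ⇑(s.orderEmbOfFin h) = ⇑(t.orderEmbOfFin h') := by subst hst; rfl

lemma emb_swap_succ' {n k : ℕ} {α : Finset (Fin n)} {b c : Fin n}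
    (hc : c ∈ α) (hb : b ∉ α) (hbc : (b : ℕ) + 1 = (c : ℕ)) (h : α.card = k)
    (h' : (insert b (α.erase c)).card = k) :
    ⇑(α.orderEmbOfFin h) = (Equiv.swap b c) ∘ ⇑((insert b (α.erase c)).orderEmbOfFin h') := by
  have hbc' : b ≠ c := fun e => by rw [e] at hbc; omega
  have hnb : b ∉ α.erase c := fun hx => hb (Finset.mem_of_mem_erase hx)
  have hset : insert c ((insert b (α.erase c)).erase b) = α := by
    rw [Finset.erase_insert hnb, Finset.insert_erase hc]
  have hcni : c ∉ insert b (α.erase c) := by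
    simp [Finset.mem_insert, hbc'.symm, Finset.mem_erase]
  have hcard : (insert c ((insert b (α.erase c)).erase b)).card = k := by rw [hset]; exact h
  have := emb_swap_succ (Finset.mem_insert_self b _) hcni hbc h' hcard
  rw [emb_congr hset hcard h] at this
  exact this

noncomputable def sumEquiv {n k : ℕ} (α : Finset (Fin n)) (h : α.card = k) :
    (Fin k ⊕ Fin (n - k)) ≃ Fin n := by
  have hkn : k ≤ n := by
    subst h; simpa using (Finset.card_le_univ α)
  have hc : αᶜ.card = n - k := by simp [Finset.card_compl, h]
  refine Equiv.ofBijective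
    (Sum.elim ⇑(α.orderEmbOfFin h) ⇑(αᶜ.orderEmbOfFin hc)) ?_
  rw [Fintype.bijective_iff_injective_and_card]
  constructor
  · intro x y hxy
    match x, y with
    | Sum.inl i, Sum.inl j =>
      simp only [Sum.elim_inl] at hxy
      exact congrArg Sum.inl ((α.orderEmbOfFin h).injective hxy)
    | Sum.inl i, Sum.inr j =>
      exfalso
      have h1 := Finset.orderEmbOfFin_mem α h i
      have h2 := Finset.orderEmbOfFin_mem αᶜ hc j
      simp only [Sum.elim_inl, Sum.elim_inr] at hxy
      rw [hxy] at h1; exact (Finset.mem_compl.1 h2) h1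
    | Sum.inr i, Sum.inl j =>
      exfalso
      have h1 := Finset.orderEmbOfFin_mem α h j
      have h2 := Finset.orderEmbOfFin_mem αᶜ hc i
      simp only [Sum.elim_inl, Sum.elim_inr] at hxy
      rw [← hxy] at h1; exact (Finset.mem_compl.1 h2) h1
    | Sum.inr i, Sum.inr j =>
      simp only [Sum.elim_inr] at hxy
      exact congrArg Sum.inr ((αᶜ.orderEmbOfFin hc).injective hxy)
  · simp [Nat.add_sub_cancel' hkn]

@[simp] lemma sumEquiv_inl {n k : ℕ} (α : Finset (Fin n)) (h : α.card = k) (i : Fin k) :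
    sumEquiv α h (Sum.inl i) = α.orderEmbOfFin h i := rfl

@[simp] lemma sumEquiv_inr {n k : ℕ} (α : Finset (Fin n)) (h : α.card = k) (j : Fin (n - k)) :
    sumEquiv α h (Sum.inr j) =
      αᶜ.orderEmbOfFin (by simp [Finset.card_compl, h]) j := rfl

def splitEquiv (n k : ℕ) (hkn : k ≤ n) : Fin n ≃ (Fin k ⊕ Fin (n - k)) :=
  (finCongr (Nat.add_sub_cancel' hkn).symm).trans finSumFinEquiv.symm

lemma splitEquiv_symm_inl (n k : ℕ) (hkn : k ≤ n) (i : Fin k) :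
    ((splitEquiv n k hkn).symm (Sum.inl i) : Fin n) = ⟨(i : ℕ), lt_of_lt_of_le i.isLt hkn⟩ := by
  apply Fin.ext
  simp [splitEquiv, Equiv.symm_trans_apply, finSumFinEquiv_apply_left]

lemma splitEquiv_symm_inr (n k : ℕ) (hkn : k ≤ n) (j : Fin (n - k)) :
    ((splitEquiv n k hkn).symm (Sum.inr j) : Fin n) = ⟨k + (j : ℕ), by have := j.isLt; omega⟩ := by
  apply Fin.ext
  simp [splitEquiv, Equiv.symm_trans_apply, finSumFinEquiv_apply_right]

noncomputable def permOf {n k : ℕ} (α : Finset (Fin n)) (h : α.card = k) :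
    Equiv.Perm (Fin n) :=
  (splitEquiv n k (by subst h; simpa using (Finset.card_le_univ α))).trans (sumEquiv α h)

lemma sign_permOf {n k : ℕ} (α : Finset (Fin n)) (h : α.card = k) :
    Equiv.Perm.sign (permOf α h) =
      (-1 : ℤˣ) ^ (∑ a ∈ α, (a : ℕ)) * (-1 : ℤˣ) ^ (∑ i ∈ Finset.range k, i) := by
  generalize hS : (∑ a ∈ α, (a : ℕ)) = N
  induction N using Nat.strong_induction_on generalizing α with
  | _ N ih =>
  by_cases hex : ∃ b c : Fin n, b ∉ α ∧ c ∈ α ∧ (b : ℕ) + 1 = (c : ℕ)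
  · obtain ⟨b, c, hb, hc, hbc⟩ := hex
    have hbc' : b ≠ c := fun e => by rw [e] at hbc; omega
    set α' := insert b (α.erase c) with hα'
    have hnb : b ∉ α.erase c := fun hx => hb (Finset.mem_of_mem_erase hx)
    have hk' : α'.card = k := by
      rw [hα', Finset.card_insert_of_notMem hnb, Finset.card_erase_of_mem hc, h]
      have : 1 ≤ k := by
        rw [← h]; exact Finset.card_pos.2 ⟨c, hc⟩
      omega
    have hsum : (∑ a ∈ α', (a : ℕ)) + 1 = N := by
      rw [hα', Finset.sum_insert hnb]
      have h2 : (∑ a ∈ α.erase c, (a : ℕ)) + (c : ℕ) = ∑ a ∈ α, (a : ℕ) :=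
        Finset.sum_erase_add α _ hc
      omega
    -- complement relation
    have hcompl : α'ᶜ = insert c (αᶜ.erase b) := by
      ext x
      simp only [hα', Finset.mem_compl, Finset.mem_insert, Finset.mem_erase]
      constructor
      · intro hx
        push_neg at hx
        by_cases hxc : x = c
        · exact Or.inl hxc
        · exact Or.inr ⟨hx.1, hx.2 hxc⟩
      · rintro (hxc | ⟨hxb, hxa⟩)
        · push_neg
          exact ⟨fun e => hbc' (e.symm.trans hxc), fun hne => absurd hxc hne⟩
        · push_neg
          exact ⟨hxb, fun _ => hxa⟩
    have hcompl_card : αᶜ.card = n - k := by simp [Finset.card_compl, h]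
    have hcompl_card' : α'ᶜ.card = n - k := by simp [Finset.card_compl, hk']
    -- embeddings
    have e1 : ⇑(α.orderEmbOfFin h) = (Equiv.swap b c) ∘ ⇑(α'.orderEmbOfFin hk') :=
      emb_swap_succ' hc hb hbc h hk'
    have e2 : ⇑(α'ᶜ.orderEmbOfFin hcompl_card') = (Equiv.swap b c) ∘ ⇑(αᶜ.orderEmbOfFin hcompl_card) := by
      have hbmem : b ∈ αᶜ := Finset.mem_compl.2 hb
      have hcmem : c ∉ αᶜ := fun hx => (Finset.mem_compl.1 hx) hc
      have hcard2 : (insert c (αᶜ.erase b)).card = n - k := by rw [← hcompl]; exact hcompl_card'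
      have := emb_swap_succ hbmem hcmem hbc hcompl_card hcard2
      rw [emb_congr hcompl hcompl_card' hcard2]
      exact this
    have e2' : ⇑(αᶜ.orderEmbOfFin hcompl_card) = (Equiv.swap b c) ∘ ⇑(α'ᶜ.orderEmbOfFin hcompl_card') := by
      rw [e2]; funext x
      simp [Equiv.swap_apply_self]
    -- permutation relation
    have hperm : permOf α h = Equiv.swap b c * permOf α' hk' := by
      apply Equiv.ext
      intro x
      rw [Equiv.Perm.mul_apply]
      show sumEquiv α h (splitEquiv n k _ x) = Equiv.swap b c (sumEquiv α' hk' (splitEquiv n k _ x))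
      generalize (splitEquiv n k _ x) = y
      cases y with
      | inl i =>
        rw [sumEquiv_inl, sumEquiv_inl]
        rw [show ⇑(α.orderEmbOfFin h) = _ from e1]; rfl
      | inr j =>
        rw [sumEquiv_inr, sumEquiv_inr]
        rw [show ⇑(αᶜ.orderEmbOfFin hcompl_card) = _ from e2']
        rfl
    have hm : (∑ a ∈ α', (a : ℕ)) = N - 1 := by omega
    rw [hperm, _root_.map_mul, Equiv.Perm.sign_swap hbc', ih (N - 1) (by omega) α' hk' hm]
    have hN1 : N = (N - 1) + 1 := by omega
    conv_rhs => rw [hN1, pow_succ]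
    rw [mul_comm ((-1 : ℤˣ) ^ (N - 1)) (-1), mul_assoc]
  · push_neg at hex
    have hkn : k ≤ n := by
      rw [← h]; simpa using Finset.card_le_univ α
    have hpred : ∀ c ∈ α, 0 < (c : ℕ) → (⟨(c : ℕ) - 1, by have := c.isLt; omega⟩ : Fin n) ∈ α := by
      intro c hcm hcpos
      by_contra hb
      refine hex _ c hb hcm ?_
      show ((c : ℕ) - 1) + 1 = (c : ℕ)
      omega
    have hdown : ∀ d : ℕ, ∀ c ∈ α, ∀ x : Fin n, (x : ℕ) + d = (c : ℕ) → x ∈ α := by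
      intro d
      induction d with
      | zero =>
        intro c hcm x hx
        have : x = c := Fin.ext (by omega)
        rwa [this]
      | succ d hd =>
        intro c hcm x hx
        have hcpos : 0 < (c : ℕ) := by omega
        refine hd _ (hpred c hcm hcpos) x ?_
        show (x : ℕ) + d = (c : ℕ) - 1
        omega
    have hmem : ∀ x : Fin n, x ∈ α ↔ (x : ℕ) < k := by
      intro x
      constructor
      · intro hx
        have hsub : Finset.Iic x ⊆ α := by
          intro y hy
          rw [Finset.mem_Iic] at hy
          exact hdown ((x : ℕ) - (y : ℕ)) x hx y (by have := Fin.le_def.1 hy; omega)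
        have := Finset.card_le_card hsub
        rw [Fin.card_Iic, h] at this
        omega
      · intro hx
        by_contra hxa
        have hsub : α ⊆ Finset.Iio x := by
          intro y hy
          rw [Finset.mem_Iio]
          rcases lt_or_ge y x with h1 | h1
          · exact h1
          · exact absurd (hdown ((y : ℕ) - (x : ℕ)) y hy x
              (by have := Fin.le_def.1 h1; omega)) hxa
        have := Finset.card_le_card hsub
        rw [Fin.card_Iio, h] at this
        omega
    have hcc : αᶜ.card = n - k := by simp [Finset.card_compl, h]
    have hfeq : (fun i : Fin k => (⟨(i : ℕ), lt_of_lt_of_le i.isLt hkn⟩ : Fin n))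
        = ⇑(α.orderEmbOfFin h) :=
      Finset.orderEmbOfFin_unique h (fun i => (hmem _).2 (by simpa using i.isLt))
        (fun i j hij => Fin.mk_lt_mk.2 hij)
    have hgeq : (fun j : Fin (n - k) => (⟨k + (j : ℕ), by have := j.isLt; omega⟩ : Fin n))
        = ⇑(αᶜ.orderEmbOfFin hcc) :=
      Finset.orderEmbOfFin_unique hcc
        (fun j => Finset.mem_compl.2 (fun hj => by have := (hmem _).1 hj; simp at this))
        (fun i j hij => Fin.mk_lt_mk.2 (by exact Nat.add_lt_add_left hij k))
    have hone : permOf α h = 1 := by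
      apply Equiv.ext
      intro x
      show sumEquiv α h (splitEquiv n k hkn x) = x
      have key : ∀ y, sumEquiv α h y = (splitEquiv n k hkn).symm y := by
        intro y
        cases y with
        | inl i =>
          rw [sumEquiv_inl, ← hfeq, splitEquiv_symm_inl]
        | inr j =>
          rw [sumEquiv_inr, emb_congr (rfl : αᶜ = αᶜ) _ hcc, ← hgeq, splitEquiv_symm_inr]
      rw [key, Equiv.symm_apply_apply]
    have hmap : α = Finset.univ.map
        ⟨fun i : Fin k => (⟨(i : ℕ), lt_of_lt_of_le i.isLt hkn⟩ : Fin n),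
          fun i j hij => Fin.ext (by simpa using congrArg Fin.val hij)⟩ := by
      ext x
      simp only [Finset.mem_map, Finset.mem_univ, true_and, Function.Embedding.coeFn_mk]
      rw [hmem x]
      constructor
      · intro hx
        exact ⟨⟨(x : ℕ), hx⟩, Fin.ext rfl⟩
      · rintro ⟨i, rfl⟩
        exact i.isLt
    have hsums : (∑ a ∈ α, (a : ℕ)) = ∑ i ∈ Finset.range k, i := by
      rw [hmap, Finset.sum_map]
      exact Fin.sum_univ_eq_sum_range (fun i => i) k
    rw [hone, _root_.map_one, ← hS, hsums, ← pow_add]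
    exact (Even.neg_one_pow ⟨_, rfl⟩).symm

lemma det_minor {n k : ℕ} {s t : Finset (Fin n)} (hs : s.card = k) (ht : t.card = k)
    (A : Matrix (Fin n) (Fin n) ℝ) :
    (A.submatrix (⇑(s.orderEmbOfFin hs)) (⇑(t.orderEmbOfFin ht))).det = minorOn A s t := by
  subst hs
  unfold minorOn
  rw [dif_pos ht]

lemma sum_emb {n k : ℕ} (s : Finset (Fin n)) (h : s.card = k) :
    (∑ i : Fin k, ((s.orderEmbOfFin h i : Fin n) : ℕ)) = ∑ a ∈ s, (a : ℕ) := by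
  apply Finset.sum_bij (fun i _ => s.orderEmbOfFin h i)
  · intro i _; exact Finset.orderEmbOfFin_mem s h i
  · intro i _ j _ hij; exact (s.orderEmbOfFin h).injective hij
  · intro a ha
    have : a ∈ Set.range ⇑(s.orderEmbOfFin h) := by
      rw [Finset.range_orderEmbOfFin]; exact ha
    obtain ⟨i, hi⟩ := this
    exact ⟨i, Finset.mem_univ i, hi⟩
  · intro i _; rfl

lemma sign_trans_symm {n k : ℕ} (γ δ : Finset (Fin n)) (hγ : γ.card = k) (hδ : δ.card = k) :
    Equiv.Perm.sign ((sumEquiv δ hδ).trans (sumEquiv γ hγ).symm)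
      = Equiv.Perm.sign (permOf δ hδ) * Equiv.Perm.sign (permOf γ hγ) := by
  have hkn : k ≤ n := by rw [← hγ]; simpa using Finset.card_le_univ γ
  have hh : ∀ x, (splitEquiv n k hkn).symm (((sumEquiv δ hδ).trans (sumEquiv γ hγ).symm) x)
      = ((permOf δ hδ).trans (permOf γ hγ).symm) ((splitEquiv n k hkn).symm x) := by
    intro x
    simp [permOf, Equiv.trans_apply, Equiv.symm_trans_apply]
  rw [Equiv.Perm.sign_eq_sign_of_equiv _ _ (splitEquiv n k hkn).symm hh]
  have : (permOf δ hδ).trans (permOf γ hγ).symm = (permOf γ hγ).symm * (permOf δ hδ) := rfl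
  rw [this, _root_.map_mul, Equiv.Perm.sign_symm, mul_comm]

lemma key_jacobi {n : ℕ} (A : Matrix (Fin n) (Fin n) ℝ) (hA : IsUnit A.det)
    (γ δ : Finset (Fin n)) (hδ : δ.card = γ.card) :
    A.det * minorOn (Matrix.diagonal (fun i : Fin n => (-1 : ℝ) ^ (i : ℕ)) * A⁻¹ *
        Matrix.diagonal (fun i : Fin n => (-1 : ℝ) ^ (i : ℕ))) γ δ = minorOn A δᶜ γᶜ := by
  set k := γ.card with hk
  have hγ : γ.card = k := rfl
  set c : Fin n → ℝ := fun i => (-1 : ℝ) ^ (i : ℕ) with hc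
  set eγ := sumEquiv γ hγ
  set eδ := sumEquiv δ hδ
  set u := eδ.trans eγ.symm with hu
  have hγc : γᶜ.card = n - k := by simp [Finset.card_compl, hγ]
  have hδc : δᶜ.card = n - k := by simp [Finset.card_compl, hδ]
  set M := A.submatrix ⇑eδ ⇑eγ with hM
  -- determinant of M
  have hdetM : M.det = ((Equiv.Perm.sign u : ℤ) : ℝ) * A.det := by
    have hsub : M = (A.submatrix ⇑eγ ⇑eγ).submatrix ⇑u id := by
      ext i j
      simp [hM, hu, Matrix.submatrix_apply, Equiv.trans_apply]
    rw [hsub, det_permute, det_submatrix_equiv_self]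
  have hAdet : A.det ≠ 0 := IsUnit.ne_zero hA
  have hsignval : ((Equiv.Perm.sign u : ℤ) : ℝ) = 1 ∨ ((Equiv.Perm.sign u : ℤ) : ℝ) = -1 := by
    rcases Int.units_eq_one_or (Equiv.Perm.sign u) with h | h <;> rw [h] <;> simp
  have hUnit : IsUnit M.det := by
    rw [hdetM, isUnit_iff_ne_zero]
    rcases hsignval with h | h <;> rw [h] <;> simp [hAdet]
  -- inverse of M
  have hMinv : M⁻¹ = A⁻¹.submatrix ⇑eγ ⇑eδ := by
    apply inv_eq_right_inv
    rw [hM, submatrix_mul_equiv, Matrix.mul_nonsing_inv A hA, submatrix_one_equiv]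
  -- blocks
  have hB11 : (M⁻¹).toBlocks₁₁
      = A⁻¹.submatrix (⇑(γ.orderEmbOfFin hγ)) (⇑(δ.orderEmbOfFin hδ)) := by
    ext i j
    rw [hMinv]
    show A⁻¹ (eγ (Sum.inl i)) (eδ (Sum.inl j)) = _
    rw [sumEquiv_inl, sumEquiv_inl]
    rfl
  have hB22 : M.toBlocks₂₂
      = A.submatrix (⇑(δᶜ.orderEmbOfFin hδc)) (⇑(γᶜ.orderEmbOfFin hγc)) := by
    ext i j
    show A (eδ (Sum.inr i)) (eγ (Sum.inr j)) = _
    rw [sumEquiv_inr, sumEquiv_inr]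
    rfl
  have hjac := block_jacobi M hUnit
  rw [hB11, hB22, det_minor hδc hγc, det_minor hγ hδ, hdetM] at hjac
  -- now the diagonal conjugation
  have hconj : (Matrix.diagonal c * A⁻¹ * Matrix.diagonal c).submatrix
        (⇑(γ.orderEmbOfFin hγ)) (⇑(δ.orderEmbOfFin hδ))
      = Matrix.diagonal (c ∘ ⇑(γ.orderEmbOfFin hγ))
        * A⁻¹.submatrix (⇑(γ.orderEmbOfFin hγ)) (⇑(δ.orderEmbOfFin hδ))
        * Matrix.diagonal (c ∘ ⇑(δ.orderEmbOfFin hδ)) := by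
    ext i j
    rw [Matrix.mul_diagonal, Matrix.diagonal_mul, Matrix.submatrix_apply,
        Matrix.mul_diagonal, Matrix.diagonal_mul]
    rfl
  have hprodγ : (∏ i : Fin k, c (γ.orderEmbOfFin hγ i)) = (-1 : ℝ) ^ (∑ a ∈ γ, (a : ℕ)) := by
    rw [hc]
    rw [Finset.prod_pow_eq_pow_sum]
    rw [sum_emb γ hγ]
  have hprodδ : (∏ i : Fin k, c (δ.orderEmbOfFin hδ i)) = (-1 : ℝ) ^ (∑ a ∈ δ, (a : ℕ)) := by
    rw [hc, Finset.prod_pow_eq_pow_sum, sum_emb δ hδ]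
  have hminor : minorOn (Matrix.diagonal c * A⁻¹ * Matrix.diagonal c) γ δ
      = (-1 : ℝ) ^ (∑ a ∈ γ, (a : ℕ)) * (-1 : ℝ) ^ (∑ a ∈ δ, (a : ℕ))
        * minorOn A⁻¹ γ δ := by
    rw [← det_minor hγ hδ, hconj, det_mul, det_mul, det_diagonal, det_diagonal]
    rw [← det_minor hγ hδ A⁻¹]
    have e1 : (∏ i : Fin k, (c ∘ ⇑(γ.orderEmbOfFin hγ)) i) = (-1:ℝ) ^ (∑ a ∈ γ, (a : ℕ)) := hprodγ
    have e2 : (∏ i : Fin k, (c ∘ ⇑(δ.orderEmbOfFin hδ)) i) = (-1:ℝ) ^ (∑ a ∈ δ, (a : ℕ)) := hprodδ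
    rw [e1, e2]
    ring
  -- sign computation
  have hsign : ((Equiv.Perm.sign u : ℤ) : ℝ)
      = (-1 : ℝ) ^ (∑ a ∈ γ, (a : ℕ)) * (-1 : ℝ) ^ (∑ a ∈ δ, (a : ℕ)) := by
    have h1 : Equiv.Perm.sign u
        = (-1 : ℤˣ) ^ ((∑ a ∈ γ, (a : ℕ)) + (∑ a ∈ δ, (a : ℕ))) := by
      rw [hu, sign_trans_symm γ δ hγ hδ, sign_permOf, sign_permOf]
      have harith : (∑ a ∈ δ, (a : ℕ)) + (∑ i ∈ Finset.range k, i)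
          + ((∑ a ∈ γ, (a : ℕ)) + (∑ i ∈ Finset.range k, i))
          = ((∑ a ∈ γ, (a : ℕ)) + (∑ a ∈ δ, (a : ℕ))) + 2 * (∑ i ∈ Finset.range k, i) := by
        ring
      rw [← pow_add, ← pow_add, ← pow_add, harith, pow_add, pow_mul]
      norm_num
    rw [h1]
    push_cast
    rw [pow_add]
  rw [hminor, ← hsign]
  linear_combination hjac

/-- Let `D = diag(1, −1, 1, …, (−1)^{n−1})`. If `A` is a K-matrix
(hence invertible), then `D A⁻¹ D⁻¹` is a K-matrix; if `A` is an SK-matrix, then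
`D A⁻¹ D⁻¹` is an SK-matrix. -/
lemma minor_univ {n : ℕ} (A : Matrix (Fin n) (Fin n) ℝ) :
    minorOn A Finset.univ Finset.univ = A.det := by
  unfold minorOn
  rw [dif_pos rfl]
  have hbij : Function.Bijective ⇑((Finset.univ : Finset (Fin n)).orderEmbOfFin rfl) := by
    rw [Fintype.bijective_iff_injective_and_card]
    exact ⟨(Finset.orderEmbOfFin _ _).injective, by simp⟩
  exact det_submatrix_equiv_self (Equiv.ofBijective _ hbij) A

lemma minor_empty {n : ℕ} (A : Matrix (Fin n) (Fin n) ℝ) :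
    minorOn A ∅ ∅ = 1 := by
  unfold minorOn
  rw [dif_pos rfl]
  exact Matrix.det_fin_zero

lemma det_pos_of_K {n : ℕ} {A : Matrix (Fin n) (Fin n) ℝ}
    (hP : ∀ α : Finset (Fin n), α.Nonempty → 0 < minorOn A α α) : 0 < A.det := by
  rcases Nat.eq_zero_or_pos n with hn | hn
  · subst hn
    have h1 : A.det = 1 := Matrix.det_fin_zero
    rw [h1]; norm_num
  · have := hP Finset.univ ⟨⟨0, hn⟩, Finset.mem_univ _⟩
    rwa [minor_univ] at this

lemma compl_erase_right {n : ℕ} (γ : Finset (Fin n)) (s : Fin n) :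
    (γ.erase s)ᶜ = insert s γᶜ := by
  ext x
  simp only [Finset.mem_compl, Finset.mem_erase, Finset.mem_insert]
  by_cases hxs : x = s <;> simp [hxs]

theorem inverse_conj_K_SK {n : ℕ} (A D : Matrix (Fin n) (Fin n) ℝ)
    (hD : D = Matrix.diagonal (fun i : Fin n => (-1 : ℝ) ^ (i : ℕ))) :
    (IsK A → IsK (D * A⁻¹ * D⁻¹)) ∧ (IsSK A → IsSK (D * A⁻¹ * D⁻¹)) := by
  subst hD
  set c : Fin n → ℝ := fun i => (-1 : ℝ) ^ (i : ℕ) with hc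
  have hDinv : (Matrix.diagonal c)⁻¹ = Matrix.diagonal c := by
    apply inv_eq_right_inv
    rw [Matrix.diagonal_mul_diagonal]
    have h1 : ∀ i : Fin n, c i * c i = 1 := by
      intro i
      rw [hc]
      show (-1 : ℝ) ^ (i : ℕ) * (-1 : ℝ) ^ (i : ℕ) = 1
      rw [← pow_add]
      exact Even.neg_one_pow ⟨(i : ℕ), rfl⟩
    rw [show (fun i => c i * c i) = fun _ : Fin n => (1 : ℝ) from funext h1,
      Matrix.diagonal_one]
  constructor
  · rintro ⟨hP, hAP⟩
    have hdet : 0 < A.det := det_pos_of_K hP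
    have hU : IsUnit A.det := isUnit_iff_ne_zero.2 (ne_of_gt hdet)
    rw [hDinv]
    constructor
    · intro α _
      have hk := key_jacobi A hU α α rfl
      have hpos : 0 < minorOn A αᶜ αᶜ := by
        rcases Finset.eq_empty_or_nonempty αᶜ with he | hne
        · rw [he, minor_empty]; norm_num
        · exact hP αᶜ hne
      nlinarith [hk, hdet, hpos]
    · intro β r s hr hs hrs
      have hcard : (β.erase s).card = (β.erase r).card := by
        rw [Finset.card_erase_of_mem hs, Finset.card_erase_of_mem hr]
      have hk := key_jacobi A hU (β.erase r) (β.erase s) hcard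
      have hrn : r ∉ insert s βᶜ := by
        simp [Finset.mem_insert, Finset.mem_compl, hrs, hr]
      have hsn : s ∉ insert r βᶜ := by
        simp [Finset.mem_insert, Finset.mem_compl, Ne.symm hrs, hs]
      have h1 : (β.erase s)ᶜ = (insert r (insert s βᶜ)).erase r := by
        rw [compl_erase_right, Finset.erase_insert hrn]
      have h2 : (β.erase r)ᶜ = (insert r (insert s βᶜ)).erase s := by
        rw [compl_erase_right, Finset.insert_comm, Finset.erase_insert hsn]
      have hmr : r ∈ insert r (insert s βᶜ) := Finset.mem_insert_self _ _
      have hms : s ∈ insert r (insert s βᶜ) :=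
        Finset.mem_insert_of_mem (Finset.mem_insert_self _ _)
      have hge := hAP (insert r (insert s βᶜ)) r s hmr hms hrs
      rw [← h1, ← h2] at hge
      nlinarith [hk, hdet, hge]
  · rintro ⟨hP, hAP⟩
    have hdet : 0 < A.det := det_pos_of_K hP
    have hU : IsUnit A.det := isUnit_iff_ne_zero.2 (ne_of_gt hdet)
    rw [hDinv]
    constructor
    · intro α _
      have hk := key_jacobi A hU α α rfl
      have hpos : 0 < minorOn A αᶜ αᶜ := by
        rcases Finset.eq_empty_or_nonempty αᶜ with he | hne
        · rw [he, minor_empty]; norm_num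
        · exact hP αᶜ hne
      nlinarith [hk, hdet, hpos]
    · intro β r s hr hs hrs
      have hcard : (β.erase s).card = (β.erase r).card := by
        rw [Finset.card_erase_of_mem hs, Finset.card_erase_of_mem hr]
      have hk := key_jacobi A hU (β.erase r) (β.erase s) hcard
      have hrn : r ∉ insert s βᶜ := by
        simp [Finset.mem_insert, Finset.mem_compl, hrs, hr]
      have hsn : s ∉ insert r βᶜ := by
        simp [Finset.mem_insert, Finset.mem_compl, Ne.symm hrs, hs]
      have h1 : (β.erase s)ᶜ = (insert r (insert s βᶜ)).erase r := by
        rw [compl_erase_right, Finset.erase_insert hrn]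
      have h2 : (β.erase r)ᶜ = (insert r (insert s βᶜ)).erase s := by
        rw [compl_erase_right, Finset.insert_comm, Finset.erase_insert hsn]
      have hmr : r ∈ insert r (insert s βᶜ) := Finset.mem_insert_self _ _
      have hms : s ∈ insert r (insert s βᶜ) :=
        Finset.mem_insert_of_mem (Finset.mem_insert_self _ _)
      have hge := hAP (insert r (insert s βᶜ)) r s hmr hms hrs
      rw [← h1, ← h2] at hge
      nlinarith [hk, hdet, hge]
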